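/- Let a, c be integers with 4 ∣ a and c odd. Then there are no 2-adic numbers w, z ∈ ℚ_2 satisfying −w² = 1 + 2a·z² + 8c·z⁴. -/
import Mathlib

theorem stmt_14 (a c : ℤ) (ha : 4 ∣ a) (hc : Odd c) :
    ¬ ∃ w z : ℚ_[2],
      -w ^ 2 = 1 + 2 * (a : ℚ_[2]) * z ^ 2 + 8 * (c : ℚ_[2]) * z ^ 4 := by
  rintro ⟨w, z, hwz⟩
  obtain ⟨b, rfl⟩ := ha
  obtain ⟨d, rfl⟩ := hc
  by_cases hz : ‖z‖ ≤ 1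
  · -- z ∈ ℤ₂, hence w ∈ ℤ₂; reduce mod 4
    have hterm2 : ‖2 * ((4 * b : ℤ) : ℚ_[2]) * z ^ 2‖ ≤ 1 := by
      rw [show (2 : ℚ_[2]) * ((4 * b : ℤ) : ℚ_[2]) = ((8 * b : ℤ) : ℚ_[2]) by push_cast; ring]
      rw [norm_mul, norm_pow]
      exact mul_le_one₀ (Padic.norm_int_le_one (p := 2) _) (by positivity)
        (pow_le_one₀ (norm_nonneg _) hz)
    have hterm3 : ‖8 * ((2 * d + 1 : ℤ) : ℚ_[2]) * z ^ 4‖ ≤ 1 := by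
      rw [show (8 : ℚ_[2]) * ((2 * d + 1 : ℤ) : ℚ_[2]) = ((8 * (2 * d + 1) : ℤ) : ℚ_[2]) by
        push_cast; ring]
      rw [norm_mul, norm_pow]
      exact mul_le_one₀ (Padic.norm_int_le_one (p := 2) _) (by positivity)
        (pow_le_one₀ (norm_nonneg _) hz)
    have hw : ‖w‖ ≤ 1 := by
      have h2 : ‖w‖ ^ 2 ≤ 1 := by
        rw [← norm_pow, show w ^ 2 = -(-w ^ 2) by ring, norm_neg, hwz]
        refine le_trans (Padic.nonarchimedean _ _) (max_le ?_ hterm3)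
        refine le_trans (Padic.nonarchimedean _ _) (max_le (by simp) hterm2)
      nlinarith [norm_nonneg w]
    set W : ℤ_[2] := ⟨w, hw⟩ with hW
    set Z : ℤ_[2] := ⟨z, hz⟩ with hZ
    have heq : -W ^ 2 = 1 + 2 * ((4 * b : ℤ) : ℤ_[2]) * Z ^ 2
        + 8 * ((2 * d + 1 : ℤ) : ℤ_[2]) * Z ^ 4 := by
      have c2 : ((2 : ℤ_[2]) : ℚ_[2]) = 2 := rfl
      have c4 : ((4 : ℤ_[2]) : ℚ_[2]) = 4 := rfl
      have c8 : ((8 : ℤ_[2]) : ℚ_[2]) = 8 := rfl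
      apply Subtype.ext
      push_cast [c2, c4, c8] at hwz ⊢
      linear_combination hwz
    have h4 := congrArg (PadicInt.toZModPow (p := 2) 2) heq
    simp only [map_neg, map_pow, map_add, map_mul, map_one, map_ofNat, map_intCast] at h4
    push_cast at h4
    have h40 : (4 : ZMod (2 ^ 2)) = 0 := by decide
    revert h4
    generalize (PadicInt.toZModPow (p := 2) 2) W = x
    generalize (PadicInt.toZModPow (p := 2) 2) Z = y
    generalize (b : ZMod (2 ^ 2)) = b'
    generalize (d : ZMod (2 ^ 2)) = d'
    intro h4
    have h1 : -x ^ 2 = 1 := by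
      linear_combination h4 + (2 * b' * y ^ 2 + 2 * (2 * d' + 1) * y ^ 4) * h40
    clear h4
    revert h1
    revert x
    decide
  · -- ‖z‖ > 1 : invert z and reduce mod 16
    push_neg at hz
    have hz0 : z ≠ 0 := by
      intro h; rw [h, norm_zero] at hz; linarith
    set u : ℚ_[2] := z⁻¹ with hu
    have huz : z * u = 1 := mul_inv_cancel₀ hz0
    have hult : ‖u‖ < 1 := by
      rw [hu, norm_inv, inv_lt_one_iff₀]
      right; exact hz
    have hule : ‖u‖ ≤ 1 := le_of_lt hult
    have hkey : -(w * u ^ 2) ^ 2 = u ^ 4 + 2 * ((4 * b : ℤ) : ℚ_[2]) * u ^ 2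
        + 8 * ((2 * d + 1 : ℤ) : ℚ_[2]) := by
      have h2 : u ^ 2 * z ^ 2 = 1 := by
        rw [← mul_pow, mul_comm u z, huz, one_pow]
      have h44 : u ^ 4 * z ^ 4 = 1 := by
        rw [← mul_pow, mul_comm u z, huz, one_pow]
      have h4 : u ^ 4 * (1 + 2 * ((4*b : ℤ) : ℚ_[2]) * z ^ 2 + 8 * ((2*d+1 : ℤ) : ℚ_[2]) * z ^ 4)
          = u ^ 4 + 2 * ((4 * b : ℤ) : ℚ_[2]) * u ^ 2 + 8 * ((2 * d + 1 : ℤ) : ℚ_[2]) := by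
        calc u ^ 4 * (1 + 2 * ((4*b : ℤ) : ℚ_[2]) * z ^ 2 + 8 * ((2*d+1 : ℤ) : ℚ_[2]) * z ^ 4)
            = u ^ 4 + 2 * ((4*b : ℤ) : ℚ_[2]) * (u ^ 2 * z ^ 2) * u ^ 2
              + 8 * ((2*d+1 : ℤ) : ℚ_[2]) * (u ^ 4 * z ^ 4) := by ring
          _ = _ := by rw [h2, h44]; ring
      rw [← h4, ← hwz]; ring
    have hterm2 : ‖2 * ((4 * b : ℤ) : ℚ_[2]) * u ^ 2‖ ≤ 1 := by
      rw [show (2 : ℚ_[2]) * ((4 * b : ℤ) : ℚ_[2]) = ((8 * b : ℤ) : ℚ_[2]) by push_cast; ring]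
      rw [norm_mul, norm_pow]
      exact mul_le_one₀ (Padic.norm_int_le_one (p := 2) _) (by positivity)
        (pow_le_one₀ (norm_nonneg _) hule)
    have hterm3 : ‖(8 : ℚ_[2]) * ((2 * d + 1 : ℤ) : ℚ_[2])‖ ≤ 1 := by
      rw [show (8 : ℚ_[2]) * ((2 * d + 1 : ℤ) : ℚ_[2]) = ((8 * (2 * d + 1) : ℤ) : ℚ_[2]) by
        push_cast; ring]
      exact Padic.norm_int_le_one (p := 2) _
    have hwu : ‖w * u ^ 2‖ ≤ 1 := by
      have h2 : ‖w * u ^ 2‖ ^ 2 ≤ 1 := by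
        rw [← norm_pow, show (w * u ^ 2) ^ 2 = -(-(w * u ^ 2) ^ 2) by ring, norm_neg, hkey]
        refine le_trans (Padic.nonarchimedean _ _) (max_le ?_ hterm3)
        refine le_trans (Padic.nonarchimedean _ _) (max_le ?_ hterm2)
        rw [norm_pow]
        exact pow_le_one₀ (norm_nonneg _) hule
      nlinarith [norm_nonneg (w * u ^ 2)]
    set W : ℤ_[2] := ⟨w * u ^ 2, hwu⟩ with hWdef
    set U : ℤ_[2] := ⟨u, hule⟩ with hUdef
    have hUlt : ‖U‖ < 1 := hult
    have hdvd : (2 : ℤ_[2]) ∣ U := by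
      have := (PadicInt.norm_lt_one_iff_dvd U).mp hUlt
      simpa using this
    obtain ⟨V, hV⟩ := hdvd
    have heq : -W ^ 2 = (2 * V) ^ 4 + 2 * ((4 * b : ℤ) : ℤ_[2]) * (2 * V) ^ 2
        + 8 * ((2 * d + 1 : ℤ) : ℤ_[2]) := by
      rw [← hV]
      have c2 : ((2 : ℤ_[2]) : ℚ_[2]) = 2 := rfl
      have c4 : ((4 : ℤ_[2]) : ℚ_[2]) = 4 := rfl
      have c8 : ((8 : ℤ_[2]) : ℚ_[2]) = 8 := rfl
      apply Subtype.ext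
      push_cast [c2, c4, c8] at hkey ⊢
      linear_combination hkey
    have h16 := congrArg (PadicInt.toZModPow (p := 2) 4) heq
    simp only [map_neg, map_pow, map_add, map_mul, map_one, map_ofNat, map_intCast] at h16
    push_cast at h16
    have h160 : (16 : ZMod (2 ^ 4)) = 0 := by decide
    revert h16
    generalize (PadicInt.toZModPow (p := 2) 4) W = x
    generalize (PadicInt.toZModPow (p := 2) 4) V = y
    generalize (b : ZMod (2 ^ 4)) = b'
    generalize (d : ZMod (2 ^ 4)) = d'
    intro h16
    have h8 : -x ^ 2 = 8 := by
      linear_combination h16 + (y ^ 4 + 2 * b' * y ^ 2 + d') * h160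
    clear h16
    revert h8
    revert x
    decide
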